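/- arXiv:2210.10288 — 4 statements merged into one kernel-verified Lean document; each statement's English description precedes it below -/
import Mathlib

section
/- Let u be a twice differentiable function on ℝ^N with ∇(Δu) = 0 (e.g. Δu constant). Then the vector field F = (2uP + u²)e_N - u²(∇²u)e_N, where P = |∇u|²/2 - u, satisfies div F = 2·(∂u/∂x_N)·P. -/
open scoped InnerProductSpace

/-- First partial derivative ∂f/∂xᵢ. -/
noncomputable def pd {n : ℕ} (f : EuclideanSpace ℝ (Fin n) → ℝ) (i : Fin n)
    (x : EuclideanSpace ℝ (Fin n)) : ℝ :=
  fderiv ℝ f x (EuclideanSpace.single i 1)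

variable {N : ℕ}

lemma pd_contDiff {f : EuclideanSpace ℝ (Fin N) → ℝ} {k : ℕ} (hf : ContDiff ℝ (k+1 : ℕ) f)
    (i : Fin N) : ContDiff ℝ (k : ℕ) (pd f i) := by
  have h := hf.fderiv_right (m := (k : WithTop ℕ∞)) (by norm_cast)
  exact h.clm_apply contDiff_const

lemma pd_add {f g : EuclideanSpace ℝ (Fin N) → ℝ} {x} (hf : DifferentiableAt ℝ f x)
    (hg : DifferentiableAt ℝ g x) (i : Fin N) :
    pd (fun y => f y + g y) i x = pd f i x + pd g i x := by
  unfold pd; rw [fderiv_fun_add hf hg]; rfl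

lemma pd_sub {f g : EuclideanSpace ℝ (Fin N) → ℝ} {x} (hf : DifferentiableAt ℝ f x)
    (hg : DifferentiableAt ℝ g x) (i : Fin N) :
    pd (fun y => f y - g y) i x = pd f i x - pd g i x := by
  unfold pd; rw [fderiv_fun_sub hf hg]; rfl

lemma pd_mul {f g : EuclideanSpace ℝ (Fin N) → ℝ} {x} (hf : DifferentiableAt ℝ f x)
    (hg : DifferentiableAt ℝ g x) (i : Fin N) :
    pd (fun y => f y * g y) i x = pd f i x * g x + f x * pd g i x := by
  unfold pd; rw [fderiv_fun_mul hf hg]; simp [mul_comm]; ring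

lemma pd_const (c : ℝ) (i : Fin N) (x) : pd (fun _ => c) i x = 0 := by
  unfold pd; rw [fderiv_fun_const]; rfl

lemma pd_sum {ι : Type*} (s : Finset ι) {f : ι → EuclideanSpace ℝ (Fin N) → ℝ} {x}
    (hf : ∀ j ∈ s, DifferentiableAt ℝ (f j) x) (i : Fin N) :
    pd (fun y => ∑ j ∈ s, f j y) i x = ∑ j ∈ s, pd (f j) i x := by
  unfold pd; rw [fderiv_fun_sum hf]; simp

lemma pd_comm {f : EuclideanSpace ℝ (Fin N) → ℝ} (hf : ContDiff ℝ 2 f) (i j : Fin N) (x) :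
    pd (pd f i) j x = pd (pd f j) i x := by
  have hsymm : IsSymmSndFDerivAt ℝ f x := hf.contDiffAt.isSymmSndFDerivAt (by simp)
  have hd : DifferentiableAt ℝ (fderiv ℝ f) x :=
    ((hf.fderiv_right (m := 1) le_rfl).differentiable one_ne_zero).differentiableAt
  have h1 : ∀ v w, fderiv ℝ (fun y => fderiv ℝ f y v) x w = fderiv ℝ (fderiv ℝ f) x w v := by
    intro v w
    rw [fderiv_clm_apply hd (differentiableAt_const v)]
    simp
  unfold pd
  rw [h1, h1, hsymm]

lemma grad_apply (f : EuclideanSpace ℝ (Fin N) → ℝ) (x) (i : Fin N) :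
    gradient f x i = pd f i x := by
  have : ⟪gradient f x, EuclideanSpace.single i (1:ℝ)⟫_ℝ
      = fderiv ℝ f x (EuclideanSpace.single i 1) := by
    rw [gradient]; exact InnerProductSpace.toDual_symm_apply
  rw [EuclideanSpace.inner_single_right] at this
  simpa [pd] using this

lemma grad_norm_sq (f : EuclideanSpace ℝ (Fin N) → ℝ) (x) :
    ‖gradient f x‖ ^ 2 = ∑ i, pd f i x ^ 2 := by
  rw [EuclideanSpace.norm_eq, Real.sq_sqrt (by positivity)]
  exact Finset.sum_congr rfl fun i _ => by rw [grad_apply]; simp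

theorem stmt_4 (n : ℕ) (u : EuclideanSpace ℝ (Fin (n + 1)) → ℝ)
    (hu : ContDiff ℝ 3 u)
    (hlap : ∀ x, (∑ i : Fin (n + 1), pd (pd u i) i x) = (n + 1 : ℝ))
    (P : EuclideanSpace ℝ (Fin (n + 1)) → ℝ)
    (hP : P = fun x => ‖gradient u x‖ ^ 2 / 2 - u x)
    (F : Fin (n + 1) → EuclideanSpace ℝ (Fin (n + 1)) → ℝ)
    (hF : F = fun i x =>
      (if i = Fin.last n then 2 * u x * P x + (u x) ^ 2 else 0)
        - (u x) ^ 2 * pd (pd u i) (Fin.last n) x) :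
    ∀ x, (∑ i : Fin (n + 1), pd (F i) i x) = 2 * pd u (Fin.last n) x * P x := by
  intro x
  set L := Fin.last n with hL
  have hu3 : ContDiff ℝ (2+1 : ℕ) u := by exact_mod_cast hu
  have h1 : ∀ i, ContDiff ℝ (2 : ℕ) (pd u i) := fun i => pd_contDiff hu3 i
  have h2 : ∀ i j, ContDiff ℝ (1 : ℕ) (pd (pd u i) j) := fun i j =>
    pd_contDiff (k := 1) (by exact_mod_cast h1 i) j
  have hud : ∀ y, DifferentiableAt ℝ u y := fun y =>
    (hu.differentiable (by norm_num)).differentiableAt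
  have h1d : ∀ i y, DifferentiableAt ℝ (pd u i) y := fun i y =>
    ((h1 i).differentiable (by norm_num)).differentiableAt
  have h2d : ∀ i j y, DifferentiableAt ℝ (pd (pd u i) j) y := fun i j y =>
    ((h2 i j).differentiable (by norm_num)).differentiableAt
  have hQd : DifferentiableAt ℝ (fun y => ∑ j, pd u j y ^ 2) x :=
    DifferentiableAt.fun_sum (fun j _ => (h1d j x).fun_pow 2)
  have hQd2 : DifferentiableAt ℝ (fun y => (∑ j, pd u j y ^ 2) / 2) x := by
    simp only [div_eq_mul_inv]; exact hQd.mul (differentiableAt_const _)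
  have hP' : P = fun y => (∑ j, pd u j y ^ 2) / 2 - u y := by
    funext y; rw [hP]; simp [grad_norm_sq]
  have hPd : DifferentiableAt ℝ P x := by rw [hP']; exact hQd2.sub (hud x)
  have hsq : ∀ (f : EuclideanSpace ℝ (Fin (n+1)) → ℝ), DifferentiableAt ℝ f x → ∀ i,
      pd (fun y => f y ^ 2) i x = 2 * f x * pd f i x := by
    intro f hf i
    have : (fun y => f y ^ 2) = fun y => f y * f y := by funext y; ring
    rw [this, pd_mul hf hf]; ring
  have hpdP : pd P L x = (∑ j, pd u j x * pd (pd u j) L x) - pd u L x := by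
    rw [hP', pd_sub hQd2 (hud x)]
    have hhalf : pd (fun y => (∑ j, pd u j y ^ 2) / 2) L x
        = (∑ j, pd (fun y => pd u j y ^ 2) L x) / 2 := by
      simp only [div_eq_mul_inv]
      rw [pd_mul hQd (differentiableAt_const _), pd_const,
        pd_sum _ (fun j _ => (h1d j x).fun_pow 2)]
      ring
    rw [hhalf]
    congr 1
    rw [Finset.sum_div]
    refine Finset.sum_congr rfl fun j _ => ?_
    rw [hsq _ (h1d j x)]; ring
  have hthird : (∑ i, pd (pd (pd u i) L) i x) = 0 := by
    have hcomm : ∀ i, pd (pd (pd u i) L) i x = pd (pd (pd u i) i) L x := fun i =>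
      pd_comm (by exact_mod_cast h1 i) L i x
    simp only [hcomm]
    rw [← pd_sum _ (fun i _ => h2d i i x)]
    have hc : (fun y => ∑ i, pd (pd u i) i y) = fun _ => ((n:ℝ) + 1) := by
      funext y; exact_mod_cast hlap y
    rw [hc, pd_const]
  have hFi : ∀ i, pd (F i) i x
      = (if i = L then 2 * (pd u L x * P x + u x * pd P L x) + 2 * u x * pd u L x else 0)
        - (2 * u x * pd u i x * pd (pd u i) L x + u x ^ 2 * pd (pd (pd u i) L) i x) := by
    intro i
    have hHd : DifferentiableAt ℝ (fun y => u y ^ 2 * pd (pd u i) L y) x :=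
      ((hud x).pow 2).mul (h2d i L x)
    have hH : pd (fun y => u y ^ 2 * pd (pd u i) L y) i x
        = 2 * u x * pd u i x * pd (pd u i) L x + u x ^ 2 * pd (pd (pd u i) L) i x := by
      rw [pd_mul ((hud x).fun_pow 2) (h2d i L x), hsq u (hud x)]
    by_cases hi : i = L
    · have hFdef : F i = fun y => (2 * u y * P y + u y ^ 2) - u y ^ 2 * pd (pd u i) L y := by
        funext y; rw [hF]; simp only [if_pos hi]
      rw [hFdef]
      have hGd : DifferentiableAt ℝ (fun y => 2 * u y * P y + u y ^ 2) x :=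
        (((hud x).const_mul 2).mul hPd).add ((hud x).pow 2)
      rw [pd_sub hGd hHd, hH, if_pos hi]
      have hG : pd (fun y => 2 * u y * P y + u y ^ 2) i x
          = 2 * (pd u i x * P x + u x * pd P i x) + 2 * u x * pd u i x := by
        rw [pd_add (((hud x).const_mul 2).fun_mul hPd) ((hud x).fun_pow 2),
          pd_mul ((hud x).const_mul 2) hPd, hsq u (hud x)]
        have h2u : pd (fun y => 2 * u y) i x = 2 * pd u i x := by
          have h := pd_mul (x := x) (f := fun _ => (2:ℝ)) (g := u)
            (differentiableAt_const _) (hud x) i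
          rw [h, pd_const]; ring
        rw [h2u]; ring
      rw [hG, hi]
    · have hFdef : F i = fun y => (0:ℝ) - u y ^ 2 * pd (pd u i) L y := by
        funext y; rw [hF]; simp only [if_neg hi]
      rw [hFdef, pd_sub (differentiableAt_const 0) hHd, pd_const, hH, if_neg hi]
  simp only [hFi]
  rw [Finset.sum_sub_distrib, Finset.sum_ite_eq' Finset.univ L]
  simp only [Finset.mem_univ, if_true]
  have e1 : (∑ i, (2 * u x * pd u i x * pd (pd u i) L x + u x ^ 2 * pd (pd (pd u i) L) i x))
      = 2 * u x * (∑ i, pd u i x * pd (pd u i) L x)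
        + u x ^ 2 * (∑ i, pd (pd (pd u i) L) i x) := by
    rw [Finset.sum_add_distrib, Finset.mul_sum, Finset.mul_sum]
    congr 1
    exact Finset.sum_congr rfl fun i _ => by ring
  rw [e1, hthird, hpdP]
  ring
end

section
/- Let u be a C³ function on an open set Ω ⊆ ℝ^N with Δu = N, let X^q(x) = x_N·x - (1/2)(|x|²+1)e_N and P = |∇u|²/2 - u. Then the differential identity N·x_N·P = div(⟨X^q,∇u⟩∇u - N·u·X^q - (1/2)|∇u|²·X^q) + (N-1)·div(x_N·u·∇u - (1/2)u²·e_N) holds pointwise in Ω. -/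
open scoped InnerProductSpace

section HD
variable {m : ℕ}

/-- `f` has directional derivative `d` at `x` in direction `v` (and is differentiable). -/
def HD (x v : EuclideanSpace ℝ (Fin m)) (f : EuclideanSpace ℝ (Fin m) → ℝ) (d : ℝ) : Prop :=
  ∃ L : EuclideanSpace ℝ (Fin m) →L[ℝ] ℝ, HasFDerivAt f L x ∧ L v = d

variable {x v : EuclideanSpace ℝ (Fin m)} {f g : EuclideanSpace ℝ (Fin m) → ℝ} {d e : ℝ}

theorem HD.fderiv_eq (h : HD x v f d) : fderiv ℝ f x v = d := by
  obtain ⟨L, hL, hv⟩ := h; rw [hL.fderiv]; exact hv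

theorem HD.congr (h : HD x v f d) (hde : d = e) : HD x v f e := hde ▸ h

theorem hd_const (c : ℝ) : HD x v (fun _ => c) 0 :=
  ⟨0, hasFDerivAt_const c x, rfl⟩

theorem hd_coord (j : Fin m) : HD x v (fun y => y j) (v j) :=
  ⟨(EuclideanSpace.proj j : EuclideanSpace ℝ (Fin m) →L[ℝ] ℝ),
    (EuclideanSpace.proj j : EuclideanSpace ℝ (Fin m) →L[ℝ] ℝ).hasFDerivAt, rfl⟩

theorem HD.add (hf : HD x v f d) (hg : HD x v g e) : HD x v (fun y => f y + g y) (d + e) := by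
  obtain ⟨L, hL, hLv⟩ := hf; obtain ⟨M, hM, hMv⟩ := hg
  exact ⟨L + M, hL.add hM, by simp [hLv, hMv]⟩

theorem HD.sub (hf : HD x v f d) (hg : HD x v g e) : HD x v (fun y => f y - g y) (d - e) := by
  obtain ⟨L, hL, hLv⟩ := hf; obtain ⟨M, hM, hMv⟩ := hg
  exact ⟨L - M, hL.sub hM, by simp [hLv, hMv]⟩

theorem HD.mul (hf : HD x v f d) (hg : HD x v g e) :
    HD x v (fun y => f y * g y) (d * g x + f x * e) := by
  obtain ⟨L, hL, hLv⟩ := hf; obtain ⟨M, hM, hMv⟩ := hg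
  exact ⟨f x • M + g x • L, hL.mul hM, by simp [hLv, hMv]; ring⟩

theorem HD.div_const (hf : HD x v f d) (c : ℝ) : HD x v (fun y => f y / c) (d / c) := by
  simp only [div_eq_mul_inv]
  exact (hf.mul (hd_const c⁻¹)).congr (by simp)

theorem hd_sum {ι : Type*} (s : Finset ι) {F : ι → EuclideanSpace ℝ (Fin m) → ℝ} {D : ι → ℝ}
    (h : ∀ j ∈ s, HD x v (F j) (D j)) :
    HD x v (fun y => ∑ j ∈ s, F j y) (∑ j ∈ s, D j) := by
  classical
  induction s using Finset.induction_on with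
  | empty => simpa using hd_const (x := x) (v := v) 0
  | insert _ _ hj ih =>
    rename_i k s'
    simp only [Finset.sum_insert hj]
    exact (h k (Finset.mem_insert_self k s')).add
      (ih fun j hjs => h j (Finset.mem_insert_of_mem hjs))

end HD

section facts
variable {m : ℕ}

theorem grad_apply_s5 (f : EuclideanSpace ℝ (Fin m) → ℝ) (y : EuclideanSpace ℝ (Fin m)) (i : Fin m) :
    gradient f y i = fderiv ℝ f y (EuclideanSpace.single i 1) := by
  have h : ⟪gradient f y, EuclideanSpace.single i 1⟫_ℝ
      = fderiv ℝ f y (EuclideanSpace.single i 1) := by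
    rw [gradient]; exact InnerProductSpace.toDual_symm_apply
  rw [← h, EuclideanSpace.inner_single_right]; simp

theorem norm_sq_eq' (a : EuclideanSpace ℝ (Fin m)) : ‖a‖ ^ 2 = ∑ i, (a i) ^ 2 := by
  rw [EuclideanSpace.norm_eq, Real.sq_sqrt (by positivity)]
  simp [sq_abs]

theorem norm_sq_eq'' (a : EuclideanSpace ℝ (Fin m)) : ‖a‖ ^ 2 = ∑ i, a i * a i := by
  rw [norm_sq_eq']; exact Finset.sum_congr rfl fun i _ => pow_two (a i)

theorem inner_eq' (a b : EuclideanSpace ℝ (Fin m)) : ⟪a, b⟫_ℝ = ∑ i, a i * b i := by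
  simp [PiLp.inner_apply, RCLike.inner_apply]
  exact Finset.sum_congr rfl fun _ _ => mul_comm _ _

end facts

/-- Second partial derivative ∂²f/∂xᵢ∂xⱼ. -/
noncomputable def pd2 {n : ℕ} (f : EuclideanSpace ℝ (Fin n) → ℝ) (i j : Fin n)
    (x : EuclideanSpace ℝ (Fin n)) : ℝ :=
  fderiv ℝ (fun y => fderiv ℝ f y (EuclideanSpace.single i 1)) x (EuclideanSpace.single j 1)

/-- Divergence of a vector field on Euclidean space. -/
noncomputable def diverg {n : ℕ} (V : EuclideanSpace ℝ (Fin n) → EuclideanSpace ℝ (Fin n))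
    (x : EuclideanSpace ℝ (Fin n)) : ℝ :=
  ∑ i, fderiv ℝ (fun y => V y i) x (EuclideanSpace.single i 1)

theorem stmt_5 (n : ℕ) (hN : 2 ≤ n + 1) (Ω : Set (EuclideanSpace ℝ (Fin (n + 1))))
    (hΩ : IsOpen Ω) (u : EuclideanSpace ℝ (Fin (n + 1)) → ℝ)
    (hu : ContDiffOn ℝ 3 u Ω)
    (hlap : ∀ x ∈ Ω, (∑ i : Fin (n + 1), pd2 u i i x) = (n + 1 : ℝ))
    (Xq : EuclideanSpace ℝ (Fin (n + 1)) → EuclideanSpace ℝ (Fin (n + 1)))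
    (hXq : Xq = fun x => x (Fin.last n) • x
      - ((‖x‖ ^ 2 + 1) / 2) • EuclideanSpace.single (Fin.last n) (1 : ℝ))
    (P : EuclideanSpace ℝ (Fin (n + 1)) → ℝ)
    (hP : P = fun x => ‖gradient u x‖ ^ 2 / 2 - u x)
    (V₁ V₂ : EuclideanSpace ℝ (Fin (n + 1)) → EuclideanSpace ℝ (Fin (n + 1)))
    (hV₁ : V₁ = fun x => ⟪Xq x, gradient u x⟫_ℝ • gradient u x
      - ((n + 1 : ℝ) * u x) • Xq x - (‖gradient u x‖ ^ 2 / 2) • Xq x)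
    (hV₂ : V₂ = fun x => (x (Fin.last n) * u x) • gradient u x
      - ((u x) ^ 2 / 2) • EuclideanSpace.single (Fin.last n) (1 : ℝ)) :
    ∀ x ∈ Ω, (n + 1 : ℝ) * x (Fin.last n) * P x = diverg V₁ x + (n : ℝ) * diverg V₂ x := by
  intro x hx
  classical
  have hu3 : ContDiffAt ℝ 3 u x := hu.contDiffAt (hΩ.mem_nhds hx)
  have hud : DifferentiableAt ℝ u x := hu3.differentiableAt (by norm_num)
  have hg2 : ContDiffAt ℝ 2 (fderiv ℝ u) x := hu3.fderiv_right (by norm_num)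
  set g : Fin (n+1) → EuclideanSpace ℝ (Fin (n+1)) → ℝ :=
    fun j y => fderiv ℝ u y (EuclideanSpace.single j 1) with hgdef
  have hgd : ∀ j, DifferentiableAt ℝ (g j) x := fun j =>
    (hg2.clm_apply contDiffAt_const).differentiableAt (by norm_num)
  have hfdd : DifferentiableAt ℝ (fderiv ℝ u) x := hg2.differentiableAt (by norm_num)
  have key : ∀ a b, fderiv ℝ (fun y => fderiv ℝ u y a) x b = fderiv ℝ (fderiv ℝ u) x b a := by
    intro a b
    have h1 : HasFDerivAt (fun y => fderiv ℝ u y a)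
        ((fderiv ℝ (fderiv ℝ u) x).flip a) x := by
      have h2 := hfdd.hasFDerivAt.clm_apply (hasFDerivAt_const a x)
      simpa using h2
    rw [h1.fderiv]; rfl
  have hsymm : ∀ i j, pd2 u i j x = pd2 u j i x := by
    intro i j
    have hs : IsSymmSndFDerivAt ℝ u x := hu3.isSymmSndFDerivAt (by norm_num)
    simp only [pd2, key]
    exact hs _ _
  have hgrad : ∀ (y : EuclideanSpace ℝ (Fin (n+1))) (j), gradient u y j = g j y :=
    fun y j => grad_apply_s5 u y j
  have htrace : ∑ i, pd2 u i i x = (n + 1 : ℝ) := hlap x hx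
  set N' := Fin.last n with hN'
  have hXqc : ∀ (y : EuclideanSpace ℝ (Fin (n+1))) (j), Xq y j
      = y N' * y j - ((∑ k, y k * y k) + 1)/2 * (if j = N' then 1 else 0) := by
    intro y j
    rw [hXq]
    simp [EuclideanSpace.single_apply, ← norm_sq_eq'']
  have hV1c : ∀ i, (fun y => V₁ y i) = fun y =>
      (∑ j, (y N' * y j - ((∑ k, y k * y k) + 1)/2 * (if j = N' then 1 else 0)) * g j y) * g i y
      - ((n+1:ℝ) * u y) * (y N' * y i - ((∑ k, y k * y k) + 1)/2 * (if i = N' then 1 else 0))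
      - ((∑ j, g j y * g j y) / 2) * (y N' * y i - ((∑ k, y k * y k) + 1)/2 * (if i = N' then 1 else 0)) := by
    intro i; funext y
    rw [hV₁]
    simp only [PiLp.sub_apply, PiLp.smul_apply, smul_eq_mul, inner_eq', norm_sq_eq'', hgrad, hXqc]
  have hV2c : ∀ i, (fun y => V₂ y i) = fun y =>
      (y N' * u y) * g i y - (u y * u y / 2) * (if i = N' then 1 else 0) := by
    intro i; funext y
    rw [hV₂]
    simp only [PiLp.sub_apply, PiLp.smul_apply, smul_eq_mul, hgrad,
      EuclideanSpace.single_apply, pow_two]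
  -- point values and derivative leaves
  set a : Fin (n+1) → ℝ := fun j => g j x with ha
  set B : Fin (n+1) → Fin (n+1) → ℝ := fun j i => pd2 u j i x with hB
  have HU : ∀ i, HD x (EuclideanSpace.single i 1) u (a i) :=
    fun i => ⟨fderiv ℝ u x, hud.hasFDerivAt, by rw [ha]⟩
  have HG : ∀ j i, HD x (EuclideanSpace.single i 1) (g j) (B j i) :=
    fun j i => ⟨fderiv ℝ (g j) x, (hgd j).hasFDerivAt, by rw [hB]; simp only [hgdef, pd2]⟩
  set dX : Fin (n+1) → Fin (n+1) → ℝ := fun i j =>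
    (if N' = i then 1 else 0) * x j + x N' * (if j = i then 1 else 0)
      - x i * (if j = N' then 1 else 0) with hdX
  set qv : ℝ := ((∑ k, x k * x k) + 1)/2 with hqv
  set Xv : Fin (n+1) → ℝ := fun j => x N' * x j - qv * (if j = N' then 1 else 0) with hXv
  set Uv : ℝ := u x with hUv
  set Sv : ℝ := ∑ j, a j * a j with hSv
  set Fv : ℝ := ∑ j, Xv j * a j with hFv
  set K : ℝ := ∑ j, x j * a j with hK
  have ha'' : ∀ j, g j x = a j := fun j => rfl
  have hXv'' : ∀ j, x N' * x j - (if j = N' then ((∑ k, x k * x k) + 1)/2 else 0) = Xv j := by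
    intro j; simp [hXv, hqv, mul_ite]
  have hD1 : ∀ i, fderiv ℝ (fun y => V₁ y i) x (EuclideanSpace.single i 1)
      = ((if N' = i then K else 0) + x N' * a i - x i * a N' + ∑ j, Xv j * B j i) * a i
          + Fv * B i i
        - ((n+1:ℝ) * a i * Xv i + (n+1:ℝ) * Uv * x N')
        - ((∑ j, a j * B j i) * Xv i + Sv/2 * x N') := by
    intro i
    rw [hV1c i]
    have HH := ((hd_sum Finset.univ (fun j _ =>
        ((((hd_coord N').mul (hd_coord j)).sub
          ((((hd_sum Finset.univ (fun k _ => (hd_coord k).mul (hd_coord k))).add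
            (hd_const 1)).div_const 2).mul
            (hd_const (if j = N' then 1 else 0))))).mul (HG j i))).mul (HG i i)).sub
        ((((hd_const ((n:ℝ)+1)).mul (HU i)).mul
          (((hd_coord N').mul (hd_coord i)).sub
          ((((hd_sum Finset.univ (fun k _ => (hd_coord k).mul (hd_coord k))).add
            (hd_const 1)).div_const 2).mul
            (hd_const (if i = N' then 1 else 0)))))) |>.sub
        (((hd_sum Finset.univ (fun j _ => (HG j i).mul (HG j i))).div_const 2).mul
          (((hd_coord N').mul (hd_coord i)).sub
          ((((hd_sum Finset.univ (fun k _ => (hd_coord k).mul (hd_coord k))).add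
            (hd_const 1)).div_const 2).mul
            (hd_const (if i = N' then 1 else 0)))))
    refine HD.fderiv_eq (HD.congr HH ?_)
    simp only [EuclideanSpace.single_apply, ite_mul, mul_ite, one_mul, mul_one, zero_mul,
      mul_zero, add_zero, zero_add, Finset.sum_add_distrib, Finset.sum_ite_eq', Finset.mem_univ,
      if_true]
    simp only [ha'', hXv'']
    have hS1 : ∑ j, (((if N' = i then x j else 0) + if j = i then x N' else 0)
        - if j = N' then (x i + x i)/2 else 0) * a j
        = (if N' = i then K else 0) + x N' * a i - x i * a N' := by
      by_cases hc : N' = i <;>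
        simp [hc, sub_mul, add_mul, ite_mul, zero_mul, add_self_div_two,
          Finset.sum_sub_distrib, Finset.sum_add_distrib, Finset.sum_ite_eq',
          hK]
    rw [hS1]
    have hS2 : ∑ j, B j i * a j = ∑ j, a j * B j i :=
      Finset.sum_congr rfl fun j _ => mul_comm _ _
    rw [hS2]
    simp only [add_self_div_two]
    rw [← hFv, ← hSv, ← hUv]
    have hdXii : (if N' = i then x i else 0) + x N' - (if i = N' then x i else 0) = x N' := by
      by_cases hc : N' = i
      · simp [hc]
      · have hc' : ¬ i = N' := fun h => hc h.symm
        simp [hc, hc']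
    rw [hdXii]
  have hD2 : ∀ i, fderiv ℝ (fun y => V₂ y i) x (EuclideanSpace.single i 1)
      = ((if N' = i then 1 else 0) * Uv + x N' * a i) * a i + (x N' * Uv) * B i i
        - Uv * a i * (if i = N' then 1 else 0) := by
    intro i
    rw [hV2c i]
    have HH := (((hd_coord N').mul (HU i)).mul (HG i i)).sub
      ((((HU i).mul (HU i)).div_const 2).mul (hd_const (if i = N' then 1 else 0)))
    refine HD.fderiv_eq (HD.congr HH ?_)
    simp only [EuclideanSpace.single_apply, ← hUv]
    ring
  -- symmetry of B
  have hsymmB : ∀ i j, B i j = B j i := by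
    intro i j; simp only [hB]; exact hsymm i j
  -- the two divergences
  have hdiv1 : diverg V₁ x
      = ∑ i, (((if N' = i then K else 0) + x N' * a i - x i * a N' + ∑ j, Xv j * B j i) * a i
          + Fv * B i i
        - ((n+1:ℝ) * a i * Xv i + (n+1:ℝ) * Uv * x N')
        - ((∑ j, a j * B j i) * Xv i + Sv/2 * x N')) := by
    unfold diverg; exact Finset.sum_congr rfl fun i _ => hD1 i
  have hdiv2 : diverg V₂ x
      = ∑ i, (((if N' = i then 1 else 0) * Uv + x N' * a i) * a i + (x N' * Uv) * B i i
        - Uv * a i * (if i = N' then 1 else 0)) := by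
    unfold diverg; exact Finset.sum_congr rfl fun i _ => hD2 i
  -- canonical sum computations
  have hcard : (Finset.univ : Finset (Fin (n+1))).card = n + 1 := by simp
  have htr : ∑ i, B i i = (n+1 : ℝ) := htrace
  have hW : ∑ i, (∑ j, a j * B j i) * Xv i = ∑ i, (∑ j, Xv j * B j i) * a i := by
    simp only [Finset.sum_mul]
    rw [Finset.sum_comm]
    exact Finset.sum_congr rfl fun p _ => Finset.sum_congr rfl fun q _ => by
      rw [hsymmB p q]; ring
  have hsum1 : ∑ i, (((if N' = i then K else 0) + x N' * a i - x i * a N' + ∑ j, Xv j * B j i) * a i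
          + Fv * B i i
        - ((n+1:ℝ) * a i * Xv i + (n+1:ℝ) * Uv * x N')
        - ((∑ j, a j * B j i) * Xv i + Sv/2 * x N'))
      = x N' * Sv - (n+1:ℝ)^2 * Uv * x N' - (n+1:ℝ) * (Sv/2) * x N' := by
    have hcanon : ∀ i : Fin (n+1),
        (((if N' = i then K else 0) + x N' * a i - x i * a N' + ∑ j, Xv j * B j i) * a i
          + Fv * B i i
        - ((n+1:ℝ) * a i * Xv i + (n+1:ℝ) * Uv * x N')
        - ((∑ j, a j * B j i) * Xv i + Sv/2 * x N'))
        = (if N' = i then K * a i else 0) + x N' * (a i * a i) - a N' * (x i * a i)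
          + (∑ j, Xv j * B j i) * a i + Fv * B i i
          - (n+1:ℝ) * (a i * Xv i) - ((∑ j, a j * B j i) * Xv i)
          - ((n+1:ℝ) * Uv * x N' + Sv/2 * x N') := by
      intro i
      by_cases h : N' = i <;> simp [h] <;> ring
    rw [Finset.sum_congr rfl fun i _ => hcanon i]
    rw [Finset.sum_sub_distrib, Finset.sum_sub_distrib, Finset.sum_sub_distrib,
      Finset.sum_add_distrib, Finset.sum_add_distrib, Finset.sum_sub_distrib,
      Finset.sum_add_distrib]
    have A1 : ∑ i, (if N' = i then K * a i else 0) = K * a N' := by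
      simp [Finset.sum_ite_eq]
    have A2 : ∑ i, x N' * (a i * a i) = x N' * Sv := by rw [hSv, Finset.mul_sum]
    have A3 : ∑ i, a N' * (x i * a i) = a N' * K := by rw [hK, Finset.mul_sum]
    have A4 : ∑ i, Fv * B i i = Fv * (n+1:ℝ) := by rw [← Finset.mul_sum, htr]
    have e3 : ∑ i, a i * Xv i = Fv := by
      rw [hFv]; exact Finset.sum_congr rfl fun j _ => mul_comm _ _
    have A5 : ∑ i, (n+1:ℝ) * (a i * Xv i) = (n+1:ℝ) * Fv := by rw [← Finset.mul_sum, e3]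
    have A6 : ∑ _i : Fin (n+1), ((n+1:ℝ) * Uv * x N' + Sv/2 * x N')
        = ((n+1:ℝ)) * ((n+1:ℝ) * Uv * x N' + Sv/2 * x N') := by
      rw [Finset.sum_const, hcard, nsmul_eq_mul]; push_cast; ring
    rw [A1, A2, A3, A4, A5, A6, hW]
    ring
  have hsum2 : ∑ i, (((if N' = i then 1 else 0) * Uv + x N' * a i) * a i + (x N' * Uv) * B i i
        - Uv * a i * (if i = N' then 1 else 0))
      = x N' * Sv + (n+1:ℝ) * x N' * Uv := by
    have hcanon : ∀ i : Fin (n+1),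
        (((if N' = i then 1 else 0) * Uv + x N' * a i) * a i + (x N' * Uv) * B i i
          - Uv * a i * (if i = N' then 1 else 0))
        = (if N' = i then Uv * a i else 0) + x N' * (a i * a i) + (x N' * Uv) * B i i
          - (if N' = i then Uv * a i else 0) := by
      intro i
      by_cases h : N' = i
      · subst h; simp; ring
      · have h' : ¬ i = N' := fun hh => h hh.symm
        simp [h, h']; ring
    rw [Finset.sum_congr rfl fun i _ => hcanon i]
    rw [Finset.sum_sub_distrib, Finset.sum_add_distrib, Finset.sum_add_distrib]
    have C2 : ∑ i, x N' * (a i * a i) = x N' * Sv := by rw [hSv, Finset.mul_sum]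
    have C3 : ∑ i, (x N' * Uv) * B i i = (x N' * Uv) * (n+1:ℝ) := by
      rw [← Finset.mul_sum, htr]
    rw [C2, C3]
    ring
  -- finish
  have hPx : P x = Sv/2 - Uv := by
    rw [hP]
    simp only [norm_sq_eq'', hgrad, ha'', ← hSv, ← hUv]
  rw [hdiv1, hdiv2, hsum1, hsum2, hPx]
  push_cast
  ring
end

section
/- Let Ω ⊆ ℝ^N satisfy the (θ,a)-uniform interior cone condition. Then for every σ with 0 < σ ≤ a/4, the parallel set Ω_σ = {x ∈ Ω : dist(x,∂Ω) > σ} satisfies the (θ, a/2)-uniform interior cone condition. -/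
open scoped InnerProductSpace
open Metric Set

/-- The `(θ, a)`-uniform interior cone condition: for every boundary point `x` there is a
unit direction `ω` such that the open cone with axis `ω`, opening width `θ`, and height `a`,
translated to any point `w ∈ B_a(x) ∩ closure Ω`, is contained in `Ω`. -/
def UnifConeCond {n : ℕ} (θ a : ℝ) (Ω : Set (EuclideanSpace ℝ (Fin n))) : Prop :=
  ∀ x ∈ frontier Ω, ∃ ω : EuclideanSpace ℝ (Fin n), ‖ω‖ = 1 ∧
    ∀ w ∈ Metric.ball x a ∩ closure Ω,
      ∀ y : EuclideanSpace ℝ (Fin n),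
        ‖y‖ * Real.cos θ < ⟪y, ω⟫_ℝ → ‖y‖ < a → w + y ∈ Ω

/-- A preconnected set avoiding the frontier of `t` that meets `t` is contained in `t`. -/
lemma aux_subset_of_preconnected {X : Type*} [TopologicalSpace X] {s t : Set X}
    (hs : IsPreconnected s) (hst : ∀ z ∈ s, z ∉ frontier t) (hne : (s ∩ t).Nonempty) :
    s ⊆ t := by
  obtain ⟨w, hws, hwt⟩ := hne
  have hwu : w ∈ interior t := by
    rw [← self_diff_frontier]; exact ⟨hwt, hst w hws⟩
  intro z hz
  by_contra hzt
  have hzv : z ∈ (closure t)ᶜ := by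
    intro hc
    exact hst z hz ⟨hc, fun hi => hzt (interior_subset hi)⟩
  have hsub : s ⊆ interior t ∪ (closure t)ᶜ := by
    intro p hp
    by_cases hpc : p ∈ closure t
    · left
      rw [← closure_diff_frontier]
      exact ⟨hpc, hst p hp⟩
    · right; exact hpc
  obtain ⟨p, -, hpu, hpv⟩ := hs (interior t) (closure t)ᶜ isOpen_interior
    isClosed_closure.isOpen_compl hsub ⟨w, hws, hwu⟩ ⟨z, hz, hzv⟩
  exact hpv (subset_closure (interior_subset hpu))

theorem stmt_14 (n : ℕ) (θ a : ℝ) (hθ : θ ∈ Set.Ioc 0 (Real.pi / 2)) (ha : 0 < a)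
    (Ω : Set (EuclideanSpace ℝ (Fin n))) (hcone : UnifConeCond θ a Ω)
    (σ : ℝ) (hσ : 0 < σ) (hσa : σ ≤ a / 4) :
    UnifConeCond θ (a / 2) {x ∈ Ω | σ < Metric.infDist x (frontier Ω)} := by
  intro x hx
  set F := frontier Ω with hF
  set S := {x ∈ Ω | σ < Metric.infDist x F} with hS
  change x ∈ frontier S at hx
  -- if the frontier of Ω is empty, S is empty and the statement is vacuous
  rcases eq_empty_or_nonempty F with hFe | hFne
  · exfalso
    have : S = ∅ := by
      ext z
      simp only [hS, mem_setOf_eq, hFe, Metric.infDist_empty, mem_empty_iff_false, iff_false,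
        not_and]
      intro _
      linarith
    rw [this, frontier_empty] at hx
    exact hx
  -- basic facts about points in the closure of S
  have hclos : closure S ⊆ {z | σ ≤ Metric.infDist z F} ∩ closure Ω := by
    apply subset_inter
    · apply closure_minimal _ (isClosed_le continuous_const (Metric.continuous_infDist_pt F))
      intro z hz
      exact le_of_lt hz.2
    · exact closure_mono (fun z hz => hz.1)
  have factA : ∀ w ∈ closure S, w ∈ interior Ω ∧ Metric.ball w σ ⊆ Ω ∧
      Metric.closedBall w σ ⊆ closure Ω := by
    intro w hw
    obtain ⟨hwd, hwc⟩ := hclos hw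
    have hwd' : σ ≤ Metric.infDist w F := hwd
    have hwnF : w ∉ F := by
      intro hmem
      have := Metric.infDist_zero_of_mem hmem
      linarith
    have hwint : w ∈ interior Ω := by
      rw [← closure_diff_frontier]; exact ⟨hwc, hwnF⟩
    have hball : Metric.ball w σ ⊆ Ω := by
      apply aux_subset_of_preconnected (convex_ball w σ).isPreconnected
      · intro z hz hzF
        have h1 : Metric.infDist w F ≤ dist w z := Metric.infDist_le_dist_of_mem hzF
        have h2 : dist z w < σ := hz
        rw [dist_comm] at h2
        linarith [hwd'.trans h1]
      · exact ⟨w, Metric.mem_ball_self hσ, interior_subset hwint⟩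
    refine ⟨hwint, hball, ?_⟩
    rw [← closure_ball w (ne_of_gt hσ)]
    exact closure_mono hball
  have hxc : x ∈ closure S := frontier_subset_closure hx
  obtain ⟨hxint, hxball, -⟩ := factA x hxc
  have hxd : σ ≤ Metric.infDist x F := (hclos hxc).1
  -- the distance from x to the frontier of Ω is exactly σ
  have hxd2 : Metric.infDist x F ≤ σ := by
    by_contra h
    push_neg at h
    apply hx.2
    apply mem_interior_iff_mem_nhds.2
    have hr : 0 < min σ (Metric.infDist x F - σ) := lt_min hσ (by linarith)
    apply Filter.mem_of_superset (Metric.ball_mem_nhds x hr)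
    intro z hz
    have hz' : dist z x < min σ (Metric.infDist x F - σ) := hz
    refine ⟨hxball (by simpa [Metric.mem_ball] using hz'.trans_le (min_le_left _ _)), ?_⟩
    have h1 : Metric.infDist x F ≤ Metric.infDist z F + dist x z :=
      Metric.infDist_le_infDist_add_dist
    have h2 : dist x z < Metric.infDist x F - σ := by
      rw [dist_comm]; exact hz'.trans_le (min_le_right _ _)
    linarith
  -- pick the closest frontier point x'
  obtain ⟨x', hx'F, hx'd⟩ := (isClosed_frontier (s := Ω)).exists_infDist_eq_dist hFne x
  have hdxx' : dist x x' ≤ σ := by rw [← hx'd]; exact hxd2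
  obtain ⟨ω, hω1, hω⟩ := hcone x' hx'F
  refine ⟨ω, hω1, ?_⟩
  rintro w ⟨hwb, hwc⟩ y hy1 hy2
  obtain ⟨hwint, -, hwcb⟩ := factA w hwc
  have hwx : dist w x < a / 2 := hwb
  -- key: for any v of norm ≤ σ, w + v + y ∈ Ω
  have key : ∀ v : EuclideanSpace ℝ (Fin n), ‖v‖ ≤ σ → w + v + y ∈ Ω := by
    intro v hv
    apply hω (w + v)
    · constructor
      · have h1 : dist (w + v) w = ‖v‖ := by
          simp [dist_eq_norm]
        have h2 : dist (w + v) x' ≤ dist (w + v) w + dist w x + dist x x' := by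
          calc dist (w + v) x' ≤ dist (w + v) x + dist x x' := dist_triangle _ _ _
            _ ≤ dist (w + v) w + dist w x + dist x x' := by
                have := dist_triangle (w + v) w x; linarith
        have : dist (w + v) x' < a := by rw [h1] at h2; linarith
        exact this
      · apply hwcb
        simp only [Metric.mem_closedBall]
        have : dist (w + v) w = ‖v‖ := by simp [dist_eq_norm]
        rw [this]; exact hv
    · exact hy1
    · linarith
  have hwyΩ : w + y ∈ Ω := by
    have := key 0 (by simp [le_of_lt hσ])
    simpa using this
  refine ⟨hwyΩ, ?_⟩
  -- the cone neighborhood: the set of admissible y' is open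
  have hUopen : IsOpen {y' : EuclideanSpace ℝ (Fin n) | ‖y'‖ * Real.cos θ < ⟪y', ω⟫_ℝ ∧ ‖y'‖ < a} := by
    apply IsOpen.inter
    · exact isOpen_lt (continuous_norm.mul continuous_const)
        (continuous_id.inner continuous_const)
    · exact isOpen_lt continuous_norm continuous_const
  have hyU : y ∈ {y' : EuclideanSpace ℝ (Fin n) | ‖y'‖ * Real.cos θ < ⟪y', ω⟫_ℝ ∧ ‖y'‖ < a} :=
    ⟨hy1, by linarith⟩
  obtain ⟨ε, hε, hεsub⟩ := Metric.isOpen_iff.1 hUopen y hyU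
  -- strict inequality for the distance to the frontier
  by_contra hcon
  push_neg at hcon
  obtain ⟨z, hzF, hzd⟩ := (isClosed_frontier (s := Ω)).exists_infDist_eq_dist hFne (w + y)
  have hdz : dist (w + y) z ≤ σ := by rw [← hzd]; exact hcon
  set v : EuclideanSpace ℝ (Fin n) := z - (w + y) with hv
  have hvn : ‖v‖ ≤ σ := by
    rw [hv, ← dist_eq_norm']  -- ‖z - (w+y)‖ = dist (w+y) z? dist_eq_norm' : dist a b = ‖b - a‖
    exact hdz
  have hzint : z ∈ interior Ω := by
    apply mem_interior_iff_mem_nhds.2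
    apply Filter.mem_of_superset (Metric.ball_mem_nhds z hε)
    intro u hu
    have hy' : u - (w + v) ∈ {y' : EuclideanSpace ℝ (Fin n) |
        ‖y'‖ * Real.cos θ < ⟪y', ω⟫_ℝ ∧ ‖y'‖ < a} := by
      apply hεsub
      have : u - (w + v) - y = u - z := by
        rw [hv]; abel
      rw [Metric.mem_ball, dist_eq_norm, this, ← dist_eq_norm]
      exact hu
    have := hω (w + v) ?_ (u - (w + v)) hy'.1 hy'.2
    · simpa using this
    · constructor
      · have h2 : dist (w + v) x' ≤ ‖v‖ + dist w x + dist x x' := by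
          have ha1 : dist (w + v) x' ≤ dist (w + v) w + dist w x' := dist_triangle _ _ _
          have ha2 : dist w x' ≤ dist w x + dist x x' := dist_triangle _ _ _
          have ha3 : dist (w + v) w = ‖v‖ := by simp [dist_eq_norm]
          linarith
        have : dist (w + v) x' < a := by linarith
        exact this
      · apply hwcb
        simp only [Metric.mem_closedBall]
        have : dist (w + v) w = ‖v‖ := by simp [dist_eq_norm]
        rw [this]; exact hvn
  exact (hzF.2 : z ∉ interior Ω) hzint
end

section
/- Let Ω ⊆ ℝ^N be a bounded domain satisfying the (θ,a)-uniform interior cone condition. Then Ω is a b-John domain with b ≤ max{ 1/sin θ, d_Ω / min{ (a/2)·sinθ/(1+sinθ), δ₀ } }, where δ₀ = δ₀(θ, a, d_Ω) is a constant such that Ω_σ is connected for all σ ≤ δ₀. -/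
open scoped InnerProductSpace
open Metric Set

/-- `Ω` is a `b`-John domain: any two distinct points can be joined by a curve inside `Ω`
along which `b · dist(·, ∂Ω)` dominates the distance to the nearest endpoint. -/
def IsJohnDomain {n : ℕ} (b : ℝ) (Ω : Set (EuclideanSpace ℝ (Fin n))) : Prop :=
  ∀ x₁ ∈ Ω, ∀ x₂ ∈ Ω, x₁ ≠ x₂ →
    ∃ ψ : ℝ → EuclideanSpace ℝ (Fin n),
      ContinuousOn ψ (Set.Icc 0 1) ∧ ψ 0 = x₁ ∧ ψ 1 = x₂ ∧
      ∀ t ∈ Set.Icc (0 : ℝ) 1, ψ t ∈ Ω ∧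
        min ‖ψ t - x₁‖ ‖ψ t - x₂‖ ≤ b * Metric.infDist (ψ t) (frontier Ω)

lemma le_infDist_of' {α : Type*} [MetricSpace α] {s : Set α} (hs : s.Nonempty) {x : α} {r : ℝ}
    (h : ∀ y ∈ s, r ≤ dist x y) : r ≤ Metric.infDist x s := by
  by_contra hlt
  obtain ⟨y, hy, hd⟩ := (Metric.infDist_lt_iff hs).1 (lt_of_not_ge hlt)
  exact absurd (h y hy) (not_le.2 hd)

lemma realAlg' {s c α N β t : ℝ} (hs : 0 < s) (hc : 0 ≤ c) (hsc : s ^ 2 + c ^ 2 = 1)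
    (ht : 0 < t) (hβ0 : 0 ≤ β) (hN2 : N ^ 2 = α ^ 2 + β ^ 2)
    (hkey : (α - t) ^ 2 + β ^ 2 < (t * s) ^ 2) : N * c < α := by
  have hts : 0 < t * s := mul_pos ht hs
  have hCSid : ((α - t) * s - β * c) ^ 2 + ((α - t) * c + β * s) ^ 2
      = ((α - t) ^ 2 + β ^ 2) * (s ^ 2 + c ^ 2) := by ring
  have hCS : ((α - t) * s - β * c) ^ 2 ≤ (α - t) ^ 2 + β ^ 2 := by
    rw [hsc, mul_one] at hCSid
    nlinarith [sq_nonneg ((α - t) * c + β * s)]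
  have hX2 : ((α - t) * s - β * c) ^ 2 < (t * s) ^ 2 := lt_of_le_of_lt hCS hkey
  have h1 : 0 < α * s - β * c := by
    nlinarith [hX2, hts, sq_nonneg ((α - t) * s - β * c + t * s)]
  have hαpos : 0 < α := by nlinarith [h1, mul_nonneg hβ0 hc, hs]
  have h15 : 0 < α * s + β * c := by
    have := mul_pos hαpos hs
    have := mul_nonneg hβ0 hc
    linarith
  have hring : α ^ 2 - (N * c) ^ 2 = (α * s - β * c) * (α * s + β * c) := by
    calc α ^ 2 - (N * c) ^ 2 = α ^ 2 - (α ^ 2 + β ^ 2) * c ^ 2 := by rw [mul_pow, hN2]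
    _ = α ^ 2 * (s ^ 2 + c ^ 2) - (α ^ 2 + β ^ 2) * c ^ 2 := by rw [hsc]; ring
    _ = (α * s - β * c) * (α * s + β * c) := by ring
  have h16 : (N * c) ^ 2 < α ^ 2 := by
    have := mul_pos h1 h15
    linarith
  exact lt_of_pow_lt_pow_left₀ 2 hαpos.le h16

lemma coneA' {n : ℕ} {θ : ℝ} (hθ1 : 0 < θ) (hθ2 : θ ≤ Real.pi / 2)
    {ω : EuclideanSpace ℝ (Fin n)} (hω : ‖ω‖ = 1) {t : ℝ} (ht : 0 < t)
    {y : EuclideanSpace ℝ (Fin n)} (hy : ‖y - t • ω‖ < t * Real.sin θ) :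
    ‖y‖ * Real.cos θ < ⟪y, ω⟫_ℝ ∧ ‖y‖ < t * (1 + Real.sin θ) := by
  have hs : 0 < Real.sin θ := Real.sin_pos_of_pos_of_lt_pi hθ1 (lt_of_le_of_lt hθ2 (by
    have := Real.pi_pos; linarith))
  have hc : 0 ≤ Real.cos θ := Real.cos_nonneg_of_mem_Icc ⟨by linarith, hθ2⟩
  have hsc : Real.sin θ ^ 2 + Real.cos θ ^ 2 = 1 := Real.sin_sq_add_cos_sq θ
  have hαN : |⟪y, ω⟫_ℝ| ≤ ‖y‖ := by
    have := abs_real_inner_le_norm y ω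
    rwa [hω, mul_one] at this
  have hα2 : ⟪y, ω⟫_ℝ ^ 2 ≤ ‖y‖ ^ 2 := by
    have h := pow_le_pow_left₀ (abs_nonneg ⟪y, ω⟫_ℝ) hαN 2
    simpa [sq_abs] using h
  have hβ2 : Real.sqrt (‖y‖ ^ 2 - ⟪y, ω⟫_ℝ ^ 2) ^ 2 = ‖y‖ ^ 2 - ⟪y, ω⟫_ℝ ^ 2 :=
    Real.sq_sqrt (by linarith)
  have hz2 : ‖y - t • ω‖ ^ 2 = ‖y‖ ^ 2 - 2 * t * ⟪y, ω⟫_ℝ + t ^ 2 := by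
    have h1 : ‖y - t • ω‖ ^ 2 = ‖y‖ ^ 2 - 2 * ⟪y, t • ω⟫_ℝ + ‖t • ω‖ ^ 2 := by
      have := @norm_sub_sq_real (EuclideanSpace ℝ (Fin n)) _ _ y (t • ω)
      linarith
    have h2 : ⟪y, t • ω⟫_ℝ = t * ⟪y, ω⟫_ℝ := real_inner_smul_right y ω t
    have h3 : ‖t • ω‖ = t := by
      rw [norm_smul, hω, mul_one, Real.norm_eq_abs, abs_of_pos ht]
    rw [h1, h2, h3]; ring
  have h4 : ‖y - t • ω‖ ^ 2 < (t * Real.sin θ) ^ 2 := by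
    nlinarith [hy, norm_nonneg (y - t • ω), mul_pos ht hs]
  have hkey : (⟪y, ω⟫_ℝ - t) ^ 2 + Real.sqrt (‖y‖ ^ 2 - ⟪y, ω⟫_ℝ ^ 2) ^ 2
      < (t * Real.sin θ) ^ 2 := by
    rw [hβ2]; nlinarith [hz2, h4]
  refine ⟨realAlg' hs hc hsc ht (Real.sqrt_nonneg _) (by rw [hβ2]; ring) hkey, ?_⟩
  have htr : ‖y‖ ≤ t + ‖y - t • ω‖ := by
    calc ‖y‖ = ‖t • ω + (y - t • ω)‖ := by congr 1; abel
    _ ≤ ‖t • ω‖ + ‖y - t • ω‖ := norm_add_le _ _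
    _ = t + ‖y - t • ω‖ := by
        rw [norm_smul, hω, mul_one, Real.norm_eq_abs, abs_of_pos ht]
  nlinarith [htr, hy]

/-- Straight-line path from `x` to `x + v`. -/
noncomputable def segPath {n : ℕ} (x v : EuclideanSpace ℝ (Fin n)) : Path x (x + v) where
  toFun u := x + (u : ℝ) • v
  continuous_toFun := by continuity
  source' := by simp
  target' := by simp

theorem stmt_15 (n : ℕ) (θ a : ℝ) (hθ : θ ∈ Set.Ioc 0 (Real.pi / 2)) (ha : 0 < a)
    (Ω : Set (EuclideanSpace ℝ (Fin n)))
    (hΩo : IsOpen Ω) (hΩb : Bornology.IsBounded Ω) (hΩconn : IsConnected Ω)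
    (hcone : UnifConeCond θ a Ω)
    (δ₀ : ℝ) (hδ₀ : 0 < δ₀)
    (hconn : ∀ σ : ℝ, 0 < σ → σ ≤ δ₀ →
      IsConnected {x ∈ Ω | σ < Metric.infDist x (frontier Ω)}) :
    IsJohnDomain
      (max (1 / Real.sin θ)
        (Metric.diam Ω / min (a / 2 * Real.sin θ / (1 + Real.sin θ)) δ₀)) Ω := by
  obtain ⟨hθ1, hθ2⟩ := hθ
  intro x₁ hx₁ x₂ hx₂ hne
  rcases Nat.eq_zero_or_pos n with hn | hn
  · subst hn; exact absurd (Subsingleton.elim x₁ x₂) hne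
  -- basic constants
  have hs : 0 < Real.sin θ := Real.sin_pos_of_pos_of_lt_pi hθ1 (lt_of_le_of_lt hθ2 (by
    have := Real.pi_pos; linarith))
  set b := max (1 / Real.sin θ)
      (Metric.diam Ω / min (a / 2 * Real.sin θ / (1 + Real.sin θ)) δ₀) with hbdef
  have hb1 : 1 / Real.sin θ ≤ b := le_max_left _ _
  have hb0 : 0 ≤ b := le_trans (by positivity) hb1
  set ε' := a / 2 * Real.sin θ / (1 + Real.sin θ) with hε'def
  have hε' : 0 < ε' := by positivity
  set m := min ε' δ₀ with hmdef
  have hm : 0 < m := lt_min hε' hδ₀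
  have hmδ : m ≤ δ₀ := min_le_right _ _
  have hmε : m ≤ ε' := min_le_left _ _
  have hb2 : Metric.diam Ω / m ≤ b := le_max_right _ _
  -- nontrivial space
  haveI : Nontrivial (EuclideanSpace ℝ (Fin n)) := by
    refine nontrivial_of_ne (EuclideanSpace.single (⟨0, hn⟩ : Fin n) (1 : ℝ)) 0 ?_
    intro h
    have := EuclideanSpace.norm_single (𝕜 := ℝ) (⟨0, hn⟩ : Fin n) (1 : ℝ)
    rw [h] at this
    simp at this
  -- frontier is nonempty
  have hfr : (frontier Ω).Nonempty := by
    by_contra h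
    rw [not_nonempty_iff_eq_empty] at h
    rcases isClopen_iff.1 (isClopen_iff_frontier_eq_empty.2 h) with h0 | hu
    · exact absurd (h0 ▸ hx₁) (notMem_empty x₁)
    · exact NormedSpace.unbounded_univ ℝ (EuclideanSpace ℝ (Fin n)) (hu ▸ hΩb)
  -- the deep set
  set M := {x ∈ Ω | m < Metric.infDist x (frontier Ω)} with hMdef
  have hMopen : IsOpen M := by
    have : M = Ω ∩ (fun x => Metric.infDist x (frontier Ω)) ⁻¹' Set.Ioi m := rfl
    rw [this]
    exact hΩo.inter (isOpen_Ioi.preimage (Metric.continuous_infDist_pt _))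
  have hMpath : IsPathConnected M := hMopen.isConnected_iff_isPathConnected.1 (hconn m hm hmδ)
  -- joinability to the deep set
  have hB : ∀ x ∈ Ω, ∃ x', x' ∈ M ∧
      JoinedIn {p | p ∈ Ω ∧ ‖p - x‖ ≤ b * Metric.infDist p (frontier Ω)} x x' := by
    intro x hx
    by_cases hdeep : m < Metric.infDist x (frontier Ω)
    · exact ⟨x, ⟨hx, hdeep⟩, JoinedIn.refl
        ⟨hx, by simpa using mul_nonneg hb0 Metric.infDist_nonneg⟩⟩
    push_neg at hdeep
    obtain ⟨xb, hxbf, hxbd⟩ := isClosed_frontier.exists_infDist_eq_dist hfr x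
    obtain ⟨ω, hω, hcx⟩ := hcone xb hxbf
    have hε'a : ε' < a := by
      rw [hε'def]
      rw [div_lt_iff₀ (by linarith)]
      nlinarith [hs, ha]
    have hxball : x ∈ Metric.ball xb a ∩ closure Ω := by
      constructor
      · rw [mem_ball]
        calc dist x xb = Metric.infDist x (frontier Ω) := hxbd.symm
        _ ≤ m := hdeep
        _ ≤ ε' := hmε
        _ < a := hε'a
      · exact subset_closure hx
    set T := a / (1 + Real.sin θ) with hTdef
    have hT : 0 < T := by positivity
    have hseg : ∀ t : ℝ, 0 < t → t ≤ T → x + t • ω ∈ Ω ∧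
        t * Real.sin θ ≤ Metric.infDist (x + t • ω) (frontier Ω) := by
      intro t ht htT
      have hsub : ∀ y : EuclideanSpace ℝ (Fin n), ‖y - t • ω‖ < t * Real.sin θ → x + y ∈ Ω := by
        intro y hy
        obtain ⟨hy1, hy2⟩ := coneA' hθ1 hθ2 hω ht hy
        refine hcx x hxball y hy1 (lt_of_lt_of_le hy2 ?_)
        calc t * (1 + Real.sin θ) ≤ T * (1 + Real.sin θ) := by nlinarith [hs]
        _ = a := by rw [hTdef]; field_simp
      have hmem : x + t • ω ∈ Ω := by
        refine hsub (t • ω) ?_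
        simp only [sub_self, norm_zero]
        positivity
      refine ⟨hmem, le_infDist_of' hfr ?_⟩
      intro q hq
      by_contra hlt
      push_neg at hlt
      have hqΩ : q ∈ Ω := by
        have h1 : ‖(q - x) - t • ω‖ < t * Real.sin θ := by
          have : (q - x) - t • ω = q - (x + t • ω) := by abel
          rw [this, ← dist_eq_norm, dist_comm]
          exact hlt
        have := hsub (q - x) h1
        simpa using this
      rw [hΩo.frontier_eq] at hq
      exact hq.2 hqΩ
    have hend := hseg T hT le_rfl
    have hTs : T * Real.sin θ = 2 * ε' := by
      rw [hTdef, hε'def]; field_simp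
    refine ⟨x + T • ω, ⟨hend.1, ?_⟩, ?_⟩
    · calc m ≤ ε' := hmε
      _ < 2 * ε' := by linarith
      _ = T * Real.sin θ := hTs.symm
      _ ≤ _ := hend.2
    · refine ⟨segPath x (T • ω), ?_⟩
      intro u
      rcases eq_or_lt_of_le u.2.1 with h0 | h0
      · have : (segPath x (T • ω)) u = x := by
          simp [segPath, ← h0]
        rw [this]
        exact ⟨hx, by simpa using mul_nonneg hb0 Metric.infDist_nonneg⟩
      · have hval : (segPath x (T • ω)) u = x + ((u : ℝ) * T) • ω := by
          simp [segPath, smul_smul]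
        rw [hval]
        have htpos : 0 < (u : ℝ) * T := mul_pos h0 hT
        have htle : (u : ℝ) * T ≤ T := by nlinarith [u.2.2, hT]
        obtain ⟨hmem, hdist⟩ := hseg ((u : ℝ) * T) htpos htle
        refine ⟨hmem, ?_⟩
        have hnorm : ‖x + ((u : ℝ) * T) • ω - x‖ = (u : ℝ) * T := by
          rw [add_sub_cancel_left, norm_smul, hω, mul_one, Real.norm_eq_abs,
            abs_of_pos htpos]
        rw [hnorm]
        calc (u : ℝ) * T = (1 / Real.sin θ) * ((u : ℝ) * T * Real.sin θ) := by
              field_simp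
        _ ≤ (1 / Real.sin θ) * Metric.infDist (x + ((u : ℝ) * T) • ω) (frontier Ω) := by
              apply mul_le_mul_of_nonneg_left hdist (by positivity)
        _ ≤ b * Metric.infDist (x + ((u : ℝ) * T) • ω) (frontier Ω) :=
              mul_le_mul_of_nonneg_right hb1 Metric.infDist_nonneg
  -- assemble
  set S := {p | p ∈ Ω ∧ min ‖p - x₁‖ ‖p - x₂‖ ≤ b * Metric.infDist p (frontier Ω)} with hSdef
  obtain ⟨x₁', hx₁'M, hJ₁⟩ := hB x₁ hx₁
  obtain ⟨x₂', hx₂'M, hJ₂⟩ := hB x₂ hx₂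
  have hMS : M ⊆ S := by
    rintro q ⟨hqΩ, hqd⟩
    refine ⟨hqΩ, ?_⟩
    calc min ‖q - x₁‖ ‖q - x₂‖ ≤ ‖q - x₁‖ := min_le_left _ _
    _ = dist q x₁ := (dist_eq_norm _ _).symm
    _ ≤ Metric.diam Ω := Metric.dist_le_diam_of_mem hΩb hqΩ hx₁
    _ = (Metric.diam Ω / m) * m := by field_simp
    _ ≤ (Metric.diam Ω / m) * Metric.infDist q (frontier Ω) := by
          apply mul_le_mul_of_nonneg_left hqd.le
          positivity
    _ ≤ b * Metric.infDist q (frontier Ω) :=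
          mul_le_mul_of_nonneg_right hb2 Metric.infDist_nonneg
  have h1 : JoinedIn S x₁ x₁' := by
    refine hJ₁.mono ?_
    rintro p ⟨hpΩ, hp⟩
    exact ⟨hpΩ, le_trans (min_le_left _ _) hp⟩
  have h3 : JoinedIn S x₂' x₂ := by
    refine (hJ₂.mono ?_).symm
    rintro p ⟨hpΩ, hp⟩
    exact ⟨hpΩ, le_trans (min_le_right _ _) hp⟩
  have h2 : JoinedIn S x₁' x₂' := (hMpath.joinedIn _ hx₁'M _ hx₂'M).mono hMS
  have hJ : JoinedIn S x₁ x₂ := (h1.trans h2).trans h3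
  refine ⟨fun t => hJ.somePath (Set.projIcc 0 1 zero_le_one t), ?_, ?_, ?_, ?_⟩
  · exact (hJ.somePath.continuous.comp continuous_projIcc).continuousOn
  · show hJ.somePath (Set.projIcc 0 1 zero_le_one 0) = x₁
    rw [Set.projIcc_left]; exact hJ.somePath.source
  · show hJ.somePath (Set.projIcc 0 1 zero_le_one 1) = x₂
    rw [Set.projIcc_right]; exact hJ.somePath.target
  · intro t ht
    have h := hJ.somePath_mem ⟨t, ht⟩
    simp only [Set.projIcc_of_mem zero_le_one ht]
    exact h
end
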